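/- Let M ≥ 2 and A, C, C' > 0, and let (α_r)_{r∈ℤ} be nonnegative real numbers with α₀ = 1 and α_r ≤ A |r|^{−(M+1)} for all r ≠ 0. Let (a_k)_{k∈ℤ} and (b_k)_{k∈ℤ} be nonnegative square-summable sequences, and suppose that for some γ > 0 and all k ∈ ℤ: a_k ≤ (C'/γ) · Σ_{r∈ℤ\{0}} Σ_{t∈ℤ} α_r · α_t · (C |r|) · a_{k−r−t} + b_k. Then there exists γ₀ > 0, depending only on A, M, C and C', such that whenever γ ≥ γ₀ one has (Σ_{k∈ℤ} a_k²)^{1/2} ≤ 2 · (Σ_{k∈ℤ} b_k²)^{1/2}. -/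

import Mathlib

/-- Cauchy–Schwarz for tsums with weights. -/
lemma cs_tsum_aux {ι : Type*} (F x : ι → ℝ) (hF0 : ∀ i, 0 ≤ F i) (hx0 : ∀ i, 0 ≤ x i)
    (hF : Summable F) (h2 : Summable fun i => F i * x i ^ 2) :
    Summable (fun i => F i * x i) ∧
      (∑' i, F i * x i) ^ 2 ≤ (∑' i, F i) * (∑' i, F i * x i ^ 2) := by
  have hsum : Summable fun i => F i * x i := by
    refine Summable.of_nonneg_of_le (fun i => mul_nonneg (hF0 i) (hx0 i)) (fun i => ?_)
      ((hF.add h2).div_const 2)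
    have := sq_nonneg (x i - 1)
    have := hF0 i
    nlinarith
  set R := (∑' i, F i) * (∑' i, F i * x i ^ 2) with hRdef
  have hR0 : 0 ≤ R :=
    mul_nonneg (tsum_nonneg hF0) (tsum_nonneg fun i => mul_nonneg (hF0 i) (sq_nonneg _))
  have key : ∀ s : Finset ι, ∑ i ∈ s, F i * x i ≤ Real.sqrt R := by
    intro s
    have h1 : (∑ i ∈ s, F i * x i) ^ 2 ≤ (∑ i ∈ s, F i) * ∑ i ∈ s, F i * x i ^ 2 := by
      have hcs := Finset.sum_mul_sq_le_sq_mul_sq s (fun i => Real.sqrt (F i))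
        (fun i => Real.sqrt (F i) * x i)
      have e1 : ∀ i, Real.sqrt (F i) * (Real.sqrt (F i) * x i) = F i * x i := by
        intro i; rw [← mul_assoc, Real.mul_self_sqrt (hF0 i)]
      have e2 : ∀ i, Real.sqrt (F i) ^ 2 = F i := fun i => Real.sq_sqrt (hF0 i)
      have e3 : ∀ i, (Real.sqrt (F i) * x i) ^ 2 = F i * x i ^ 2 := by
        intro i; rw [mul_pow, Real.sq_sqrt (hF0 i)]
      simpa only [e1, e2, e3] using hcs
    have h2' : (∑ i ∈ s, F i * x i) ^ 2 ≤ R := by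
      refine h1.trans (mul_le_mul (Summable.sum_le_tsum s (fun i _ => hF0 i) hF)
        (Summable.sum_le_tsum s (fun i _ => mul_nonneg (hF0 i) (sq_nonneg _)) h2)
        (Finset.sum_nonneg fun i _ => mul_nonneg (hF0 i) (sq_nonneg _))
        (tsum_nonneg hF0))
    have hs0 : 0 ≤ ∑ i ∈ s, F i * x i :=
      Finset.sum_nonneg fun i _ => mul_nonneg (hF0 i) (hx0 i)
    calc ∑ i ∈ s, F i * x i = Real.sqrt ((∑ i ∈ s, F i * x i) ^ 2) :=
          (Real.sqrt_sq hs0).symm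
      _ ≤ Real.sqrt R := Real.sqrt_le_sqrt h2'
  have hle : ∑' i, F i * x i ≤ Real.sqrt R := Summable.tsum_le_of_sum_le hsum key
  refine ⟨hsum, ?_⟩
  have h0 : 0 ≤ ∑' i, F i * x i := tsum_nonneg fun i => mul_nonneg (hF0 i) (hx0 i)
  calc (∑' i, F i * x i) ^ 2 ≤ Real.sqrt R ^ 2 := by
        exact pow_le_pow_left₀ h0 hle 2
    _ = R := Real.sq_sqrt hR0

/-- Abstract two-sided cascade estimate: if all global amplification factors are bounded by
`C|r|`, the iteration inequality
`a_k ≤ (C'/γ) Σ_{r≠0} Σ_t α_r α_t (C|r|) a_{k−r−t} + b_k` can be summed in `ℓ²(ℤ)`: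
there is `γ₀ > 0`, depending only on `A, M, C, C'`, such that for `γ ≥ γ₀` one has
`‖a‖_{ℓ²} ≤ 2 ‖b‖_{ℓ²}`. -/
theorem stmt_14 (M A C C' : ℝ) (hM : 2 ≤ M) (hA : 0 < A) (hC : 0 < C) (hC' : 0 < C') :
    ∃ γ₀ > (0 : ℝ),
      ∀ α : ℤ → ℝ, (∀ r : ℤ, 0 ≤ α r) → α 0 = 1 →
        (∀ r : ℤ, r ≠ 0 → α r ≤ A * ((|r| : ℤ) : ℝ) ^ (-(M + 1))) →
        ∀ a b : ℤ → ℝ, (∀ k : ℤ, 0 ≤ a k) → (∀ k : ℤ, 0 ≤ b k) →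
          Summable (fun k : ℤ => (a k) ^ 2) → Summable (fun k : ℤ => (b k) ^ 2) →
          ∀ γ : ℝ, 0 < γ →
            (∀ k : ℤ, a k ≤ (C' / γ) *
                (∑' r : ℤ, ∑' t : ℤ,
                  if r = 0 then 0 else α r * α t * (C * ((|r| : ℤ) : ℝ)) * a (k - r - t)) + b k) →
            γ₀ ≤ γ →
            Real.sqrt (∑' k : ℤ, (a k) ^ 2) ≤ 2 * Real.sqrt (∑' k : ℤ, (b k) ^ 2) := by
  classical
  have hZsum : Summable fun r : ℤ => 1 / (r : ℝ) ^ 2 :=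
    Real.summable_one_div_int_pow.mpr one_lt_two
  set Z : ℝ := ∑' r : ℤ, 1 / (r : ℝ) ^ 2 with hZdef
  have hZ0 : 0 ≤ Z := tsum_nonneg fun r => by positivity
  refine ⟨2 * C' * C * (A * Z + 1) ^ 2 + 1, by positivity, ?_⟩
  intro α hα0 hα1 hαbd a b ha0 hb0 hasum hbsum γ hγ hiter hγ₀
  -- basic facts about |r| for r ≠ 0
  have hxfact : ∀ r : ℤ, r ≠ 0 → (1 : ℝ) ≤ ((|r| : ℤ) : ℝ) := by
    intro r hr
    exact_mod_cast Int.one_le_abs (by simpa using hr)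
  have hxsq : ∀ r : ℤ, ((|r| : ℤ) : ℝ) ^ 2 = (r : ℝ) ^ 2 := by
    intro r; push_cast; rw [sq_abs]
  -- pointwise bounds
  have hpow : ∀ r : ℤ, r ≠ 0 → ∀ y : ℝ, y ≤ -2 →
      ((|r| : ℤ) : ℝ) ^ y ≤ 1 / (r : ℝ) ^ 2 := by
    intro r hr y hy
    have hx1 := hxfact r hr
    have hx0 : (0 : ℝ) < ((|r| : ℤ) : ℝ) := lt_of_lt_of_le one_pos hx1
    have h1 : ((|r| : ℤ) : ℝ) ^ y ≤ ((|r| : ℤ) : ℝ) ^ (-2 : ℝ) :=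
      Real.rpow_le_rpow_of_exponent_le hx1 hy
    have h2 : ((|r| : ℤ) : ℝ) ^ (-2 : ℝ) = 1 / (r : ℝ) ^ 2 := by
      rw [Real.rpow_neg hx0.le, show (2 : ℝ) = ((2 : ℕ) : ℝ) by norm_num,
        Real.rpow_natCast, one_div, hxsq r]
    linarith
  have hb1 : ∀ r : ℤ, r ≠ 0 → α r * (C * ((|r| : ℤ) : ℝ)) ≤ C * A * (1 / (r : ℝ) ^ 2) := by
    intro r hr
    have hx1 := hxfact r hr
    have hx0 : (0 : ℝ) < ((|r| : ℤ) : ℝ) := lt_of_lt_of_le one_pos hx1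
    have h1 : α r * (C * ((|r| : ℤ) : ℝ)) ≤
        A * ((|r| : ℤ) : ℝ) ^ (-(M + 1)) * (C * ((|r| : ℤ) : ℝ)) := by
      have := hαbd r hr
      have hCx : 0 ≤ C * ((|r| : ℤ) : ℝ) := by positivity
      exact mul_le_mul_of_nonneg_right this hCx
    have h2 : ((|r| : ℤ) : ℝ) ^ (-(M + 1)) * ((|r| : ℤ) : ℝ) = ((|r| : ℤ) : ℝ) ^ (-M) := by
      rw [show (-M : ℝ) = -(M + 1) + 1 by ring, Real.rpow_add_one hx0.ne']
    have h3 : ((|r| : ℤ) : ℝ) ^ (-M) ≤ 1 / (r : ℝ) ^ 2 := hpow r hr (-M) (by linarith)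
    calc α r * (C * ((|r| : ℤ) : ℝ))
        ≤ A * ((|r| : ℤ) : ℝ) ^ (-(M + 1)) * (C * ((|r| : ℤ) : ℝ)) := h1
      _ = C * A * (((|r| : ℤ) : ℝ) ^ (-(M + 1)) * ((|r| : ℤ) : ℝ)) := by ring
      _ = C * A * ((|r| : ℤ) : ℝ) ^ (-M) := by rw [h2]
      _ ≤ C * A * (1 / (r : ℝ) ^ 2) := by
          exact mul_le_mul_of_nonneg_left h3 (by positivity)
  have hαle : ∀ r : ℤ, α r ≤ A * (1 / (r : ℝ) ^ 2) + (if r = 0 then (1 : ℝ) else 0) := by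
    intro r
    by_cases hr : r = 0
    · subst hr; simp [hα1]
    · have h1 : α r ≤ A * ((|r| : ℤ) : ℝ) ^ (-(M + 1)) := hαbd r hr
      have h2 : ((|r| : ℤ) : ℝ) ^ (-(M + 1)) ≤ 1 / (r : ℝ) ^ 2 := hpow r hr _ (by linarith)
      have : α r ≤ A * (1 / (r : ℝ) ^ 2) :=
        h1.trans (mul_le_mul_of_nonneg_left h2 hA.le)
      simpa [hr, one_div] using this
  -- the weight functions
  set f₁ : ℤ → ℝ := fun r => if r = 0 then 0 else α r * (C * ((|r| : ℤ) : ℝ)) with hf₁def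
  have hf₁0 : ∀ r, 0 ≤ f₁ r := by
    intro r; simp only [hf₁def]
    split_ifs
    · exact le_refl 0
    · exact mul_nonneg (hα0 r) (by positivity)
  have hf₁le : ∀ r, f₁ r ≤ C * A * (1 / (r : ℝ) ^ 2) := by
    intro r; simp only [hf₁def]
    split_ifs with hr
    · positivity
    · exact hb1 r hr
  have hf₁sum : Summable f₁ :=
    Summable.of_nonneg_of_le hf₁0 hf₁le (hZsum.mul_left (C * A))
  have hf₁tsum : ∑' r, f₁ r ≤ C * A * Z := by
    calc ∑' r, f₁ r ≤ ∑' r : ℤ, C * A * (1 / (r : ℝ) ^ 2) :=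
        Summable.tsum_le_tsum hf₁le hf₁sum (hZsum.mul_left (C * A))
      _ = C * A * Z := by rw [tsum_mul_left]
  have hitesum : Summable (fun r : ℤ => if r = 0 then (1 : ℝ) else 0) := by
    apply summable_of_ne_finset_zero (s := {0})
    intro r hr
    simp only [Finset.mem_singleton] at hr
    simp [hr]
  have hαsum : Summable α :=
    Summable.of_nonneg_of_le hα0 hαle ((hZsum.mul_left A).add hitesum)
  have hαtsum : ∑' r, α r ≤ A * Z + 1 := by
    calc ∑' r, α r ≤ ∑' r : ℤ, (A * (1 / (r : ℝ) ^ 2) + if r = 0 then (1 : ℝ) else 0) :=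
        Summable.tsum_le_tsum hαle hαsum ((hZsum.mul_left A).add hitesum)
      _ = A * Z + 1 := by
          rw [Summable.tsum_add (hZsum.mul_left A) hitesum, tsum_mul_left, tsum_ite_eq (0 : ℤ) (fun _ => (1 : ℝ))]
  -- the product kernel
  set F : ℤ × ℤ → ℝ := fun p => f₁ p.1 * α p.2 with hFdef
  have hF0 : ∀ p, 0 ≤ F p := fun p => mul_nonneg (hf₁0 p.1) (hα0 p.2)
  have hFsum : Summable F := hf₁sum.mul_of_nonneg hαsum hf₁0 hα0
  set S : ℝ := ∑' p, F p with hSdef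
  have hS0 : 0 ≤ S := tsum_nonneg hF0
  have hSeq : S = (∑' r, f₁ r) * ∑' t, α t := by
    rw [hSdef, Summable.tsum_prod hFsum]
    simp only [hFdef]
    calc ∑' (r : ℤ) (t : ℤ), f₁ r * α t = ∑' r : ℤ, f₁ r * ∑' t, α t :=
        tsum_congr fun r => tsum_mul_left
      _ = (∑' r, f₁ r) * ∑' t, α t := tsum_mul_right
  have hSle : S ≤ C * (A * Z + 1) ^ 2 := by
    rw [hSeq]
    have h1 : 0 ≤ ∑' r, f₁ r := tsum_nonneg hf₁0
    have h2 : 0 ≤ ∑' t, α t := tsum_nonneg hα0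
    nlinarith [hf₁tsum, hαtsum, mul_nonneg hC.le (mul_nonneg hA.le hZ0)]
  -- norms
  set T : ℝ := ∑' k, a k ^ 2 with hTdef
  set B : ℝ := ∑' k, b k ^ 2 with hBdef
  have hT0 : 0 ≤ T := tsum_nonneg fun k => sq_nonneg _
  have hB0 : 0 ≤ B := tsum_nonneg fun k => sq_nonneg _
  have habd : ∀ j, a j ≤ Real.sqrt T := by
    intro j
    have h1 : a j ^ 2 ≤ T := Summable.le_tsum hasum j fun i _ => sq_nonneg _
    calc a j = Real.sqrt (a j ^ 2) := (Real.sqrt_sq (ha0 j)).symm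
      _ ≤ Real.sqrt T := Real.sqrt_le_sqrt h1
  -- translate facts
  have htrans_sum : ∀ c : ℤ, Summable fun k : ℤ => a (k - c) ^ 2 := by
    intro c
    exact ((Equiv.subRight c).summable_iff (f := fun j : ℤ => a j ^ 2)).mpr hasum
  have htrans_tsum : ∀ c : ℤ, ∑' k : ℤ, a (k - c) ^ 2 = T := by
    intro c
    exact (Equiv.subRight c).tsum_eq (fun j : ℤ => a j ^ 2)
  -- the big kernel function
  set H : (ℤ × ℤ) × ℤ → ℝ := fun q => F q.1 * a (q.2 - q.1.1 - q.1.2) ^ 2 with hHdef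
  have hH0 : ∀ q, 0 ≤ H q := fun q => mul_nonneg (hF0 q.1) (sq_nonneg _)
  have hslice : ∀ p : ℤ × ℤ, Summable fun k : ℤ => H (p, k) := by
    intro p
    have : (fun k : ℤ => H (p, k)) = fun k : ℤ => F p * a (k - (p.1 + p.2)) ^ 2 := by
      funext k; simp only [hHdef, sub_sub]
    rw [this]
    exact (htrans_sum (p.1 + p.2)).mul_left (F p)
  have hslicetsum : ∀ p : ℤ × ℤ, ∑' k : ℤ, H (p, k) = F p * T := by
    intro p
    have : (fun k : ℤ => H (p, k)) = fun k : ℤ => F p * a (k - (p.1 + p.2)) ^ 2 := by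
      funext k; simp only [hHdef, sub_sub]
    rw [this, tsum_mul_left, htrans_tsum]
  have hHsum : Summable H := by
    refine (summable_prod_of_nonneg fun q => hH0 q).mpr ⟨hslice, ?_⟩
    have : (fun p : ℤ × ℤ => ∑' k : ℤ, H (p, k)) = fun p => F p * T := by
      funext p; exact hslicetsum p
    rw [this]
    exact hFsum.mul_right T
  -- the function w
  set w : ℤ → ℝ := fun k => ∑' p : ℤ × ℤ, F p * a (k - p.1 - p.2) ^ 2 with hwdef
  have hwslice : ∀ k : ℤ, Summable fun p : ℤ × ℤ => F p * a (k - p.1 - p.2) ^ 2 := by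
    intro k
    have := hHsum.prod_symm.prod_factor k
    exact this
  have hwsum : Summable w := by
    have := hHsum.prod_symm.prod
    exact this
  have hwtsum : ∑' k, w k = S * T := by
    have hcomm : ∑' k : ℤ, ∑' p : ℤ × ℤ, H (p, k) = ∑' p : ℤ × ℤ, ∑' k : ℤ, H (p, k) :=
      Summable.tsum_comm (f := fun p k => H (p, k)) hHsum
    calc ∑' k, w k = ∑' k : ℤ, ∑' p : ℤ × ℤ, H (p, k) := rfl
      _ = ∑' p : ℤ × ℤ, ∑' k : ℤ, H (p, k) := hcomm
      _ = ∑' p : ℤ × ℤ, F p * T := tsum_congr hslicetsum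
      _ = S * T := by rw [tsum_mul_right]
  -- the function u
  set u : ℤ → ℝ := fun k => ∑' p : ℤ × ℤ, F p * a (k - p.1 - p.2) with hudef
  have hu0 : ∀ k, 0 ≤ u k :=
    fun k => tsum_nonneg fun p => mul_nonneg (hF0 p) (ha0 _)
  have hCS : ∀ k, Summable (fun p : ℤ × ℤ => F p * a (k - p.1 - p.2)) ∧
      u k ^ 2 ≤ S * w k := by
    intro k
    have := cs_tsum_aux F (fun p : ℤ × ℤ => a (k - p.1 - p.2)) hF0 (fun p => ha0 _)
      hFsum (hwslice k)
    exact this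
  -- u equals the iterated sum from the hypothesis
  have hueq : ∀ k : ℤ, (∑' r : ℤ, ∑' t : ℤ,
      if r = 0 then 0 else α r * α t * (C * ((|r| : ℤ) : ℝ)) * a (k - r - t)) = u k := by
    intro k
    have h1 : u k = ∑' (r : ℤ) (t : ℤ), F (r, t) * a (k - r - t) :=
      Summable.tsum_prod ((hCS k).1)
    rw [h1]
    refine tsum_congr fun r => tsum_congr fun t => ?_
    simp only [hFdef, hf₁def]
    split_ifs with hr
    · simp
    · ring
  -- sum of u^2
  have husq_sum : Summable fun k => u k ^ 2 := by
    refine Summable.of_nonneg_of_le (fun k => sq_nonneg _) (fun k => (hCS k).2)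
      (hwsum.mul_left S)
  have husq_tsum : ∑' k, u k ^ 2 ≤ S ^ 2 * T := by
    calc ∑' k, u k ^ 2 ≤ ∑' k, S * w k :=
        Summable.tsum_le_tsum (fun k => (hCS k).2) husq_sum (hwsum.mul_left S)
      _ = S * (S * T) := by rw [tsum_mul_left, hwtsum]
      _ = S ^ 2 * T := by ring
  -- the comparison function c
  have hac : ∀ k, a k ≤ C' / γ * u k + b k := by
    intro k
    have := hiter k
    rwa [hueq k] at this
  have hcsq : ∀ k, a k ^ 2 ≤ 2 * (C' / γ) ^ 2 * u k ^ 2 + 2 * b k ^ 2 := by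
    intro k
    have h1 := hac k
    have h2 := ha0 k
    have h3 := hb0 k
    have h4 := hu0 k
    have h5 : 0 < C' / γ := by positivity
    nlinarith [sq_nonneg (C' / γ * u k - b k), sq_nonneg (C' / γ * u k + b k)]
  have hrhs_sum : Summable fun k => 2 * (C' / γ) ^ 2 * u k ^ 2 + 2 * b k ^ 2 :=
    (husq_sum.mul_left _).add (hbsum.mul_left 2)
  have hTle : T ≤ 2 * (C' / γ) ^ 2 * (S ^ 2 * T) + 2 * B := by
    calc T ≤ ∑' k, (2 * (C' / γ) ^ 2 * u k ^ 2 + 2 * b k ^ 2) :=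
        Summable.tsum_le_tsum hcsq hasum hrhs_sum
      _ = 2 * (C' / γ) ^ 2 * ∑' k, u k ^ 2 + 2 * B := by
          rw [Summable.tsum_add (husq_sum.mul_left _) (hbsum.mul_left 2), tsum_mul_left, tsum_mul_left]
      _ ≤ 2 * (C' / γ) ^ 2 * (S ^ 2 * T) + 2 * B := by
          have : 0 ≤ 2 * (C' / γ) ^ 2 := by positivity
          nlinarith [husq_tsum]
  -- choose γ large
  clear_value Z S T B
  have hγS : C' / γ * S ≤ 1 / 2 := by
    have h1 : C' * S ≤ C' * (C * (A * Z + 1) ^ 2) :=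
      mul_le_mul_of_nonneg_left hSle hC'.le
    have h2 : 2 * (C' * S) ≤ γ := by linarith [hγ₀, h1]
    rw [div_mul_eq_mul_div, div_le_iff₀ hγ]
    linarith
  have hγS0 : 0 ≤ C' / γ * S := mul_nonneg (by positivity) hS0
  have hTB : T ≤ 4 * B := by
    have h1 : 2 * (C' / γ) ^ 2 * S ^ 2 ≤ 1 / 2 := by
      have h6 : (C' / γ * S) * (C' / γ * S) ≤ (1 / 2) * (1 / 2) :=
        mul_le_mul hγS hγS hγS0 (by norm_num)
      have h3 : 2 * (C' / γ) ^ 2 * S ^ 2 = 2 * ((C' / γ * S) * (C' / γ * S)) := by ring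
      rw [h3]
      linarith
    have h4 : 2 * (C' / γ) ^ 2 * (S ^ 2 * T) = (2 * (C' / γ) ^ 2 * S ^ 2) * T := by ring
    have h5 : (2 * (C' / γ) ^ 2 * S ^ 2) * T ≤ (1 / 2) * T :=
      mul_le_mul_of_nonneg_right h1 hT0
    rw [h4] at hTle
    linarith
  calc Real.sqrt T ≤ Real.sqrt (4 * B) := Real.sqrt_le_sqrt hTB
    _ = 2 * Real.sqrt B := by
        rw [show (4 : ℝ) = 2 ^ 2 by norm_num, Real.sqrt_mul (by positivity) B,
          Real.sqrt_sq (by norm_num)]
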